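/- Let N be a 3-prime zero-symmetric left near-ring admitting a nonzero multiplicative derivation d with d(N) contained in the multiplicative center Z of N. Then multiplication in N is commutative and (N,+) is abelian (i.e., N is a commutative ring). -/
import Mathlib


class LeftNearRing (N : Type*) extends AddGroup N, Mul N where
  mul_assoc : ∀ a b c : N, a * b * c = a * (b * c)
  left_distrib : ∀ a b c : N, a * (b + c) = a * b + a * c

theorem stmt5 {N : Type*} [LeftNearRing N]
    (hzs : ∀ x : N, 0 * x = 0)
    (hp : ∀ a b : N, (∀ n : N, a * n * b = 0) → a = 0 ∨ b = 0)
    (d : N → N) (hd : ∀ x y : N, d (x * y) = x * d y + d x * y)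
    (hd0 : ∃ x : N, d x ≠ 0)
    (hc : ∀ x y : N, d x * y = y * d x) :
    (∀ x y : N, x * y = y * x) ∧ (∀ x y : N, x + y = y + x) := by
  obtain ⟨c, hc0⟩ := hd0
  have massoc := LeftNearRing.mul_assoc (N := N)
  have ldist := LeftNearRing.left_distrib (N := N)
  -- x * 0 = 0
  have mz : ∀ x : N, x * 0 = 0 := by
    intro x
    have h := ldist x 0 0
    rw [add_zero] at h
    have h2 : x * 0 + 0 = x * 0 + x * 0 := by rw [add_zero]; exact h
    exact (add_left_cancel h2).symm
  -- a * (-b) = -(a*b)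
  have mneg : ∀ a b : N, a * (-b) = -(a * b) := by
    intro a b
    have h := ldist a b (-b)
    rw [add_neg_cancel, mz] at h
    exact (neg_eq_of_add_eq_zero_right h.symm).symm
  -- Lemma A : d c is not a left zero divisor
  have lemA : ∀ a : N, d c * a = 0 → a = 0 := by
    intro a ha
    rcases hp (d c) a (fun n => by rw [hc c n, massoc, ha, mz]) with h | h
    · exact absurd h hc0
    · exact h
  -- partial distributivity
  have P : ∀ x y z : N, (x * d y + d x * y) * z = x * (d y * z) + d x * (y * z) := by
    intro x y z
    have h1 := hd (x * y) z
    rw [hd x y] at h1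
    have h2 := hd x (y * z)
    rw [hd y z, ldist] at h2
    rw [massoc x y z] at h1
    have h3 := h1.symm.trans h2
    rw [massoc x y (d z), add_assoc] at h3
    exact add_left_cancel h3
  -- c is central
  have hcx : ∀ x : N, c * x = x * c := by
    intro x
    have h1 : d (x * c) * c = c * d (x * c) := hc (x * c) c
    rw [hd x c, P x c c, ldist c (x * d c) (d x * c)] at h1
    have e2 : c * (d x * c) = d x * (c * c) := by
      rw [← massoc c (d x) c, ← hc x c, massoc]
    rw [e2] at h1
    have h2 : x * (d c * c) = c * (x * d c) := add_right_cancel h1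
    -- rewrite both sides into (d c) * _
    have hL : x * (d c * c) = d c * (x * c) := by
      rw [hc c c, ← massoc, hc c (x * c)]
    have hR : c * (x * d c) = d c * (c * x) := by
      rw [← hc c x, ← massoc, ← hc c c, massoc]
    rw [hL, hR] at h2
    have h4 : d c * (c * x + -(x * c)) = 0 := by
      rw [ldist, mneg, ← h2, add_neg_cancel]
    have h5 := lemA _ h4
    have : c * x - x * c = 0 := by rwa [sub_eq_add_neg]
    exact sub_eq_zero.mp this
  -- c * d x is central
  have h5 : ∀ x t : N, c * d x * t = t * (c * d x) := by
    intro x t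
    rw [massoc, hc x t, ← massoc, hcx t, massoc]
  -- multiplication is commutative
  have mulcomm : ∀ t x : N, t * x = x * t := by
    intro t x
    have h1 : d (c * x) * t = t * d (c * x) := hc (c * x) t
    rw [hd c x, P c x t, ldist t (c * d x) (d c * x)] at h1
    have e1 : c * (d x * t) = t * (c * d x) := by rw [← massoc]; exact h5 x t
    rw [e1] at h1
    have h2 : d c * (x * t) = t * (d c * x) := add_left_cancel h1
    have h3 : d c * (x * t) = d c * (t * x) := by
      rw [h2, ← massoc, ← hc c t, massoc]
    have h4 : d c * (x * t + -(t * x)) = 0 := by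
      rw [ldist, mneg, h3, add_neg_cancel]
    have h6 := lemA _ h4
    have : x * t - t * x = 0 := by rwa [sub_eq_add_neg]
    exact (sub_eq_zero.mp this).symm
  refine ⟨fun x y => mulcomm x y, ?_⟩
  -- right distributivity, from commutativity
  have rdist : ∀ a b z : N, (a + b) * z = a * z + b * z := by
    intro a b z
    rw [mulcomm (a + b) z, ldist, mulcomm z a, mulcomm z b]
  -- addition is commutative
  intro a b
  set w := d c with hw
  have E1 : (a + b) * (w + w) = (a * w + b * w) + (a * w + b * w) := by
    rw [ldist (a + b) w w, rdist a b w]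
  have E2 : (a + b) * (w + w) = (a * w + a * w) + (b * w + b * w) := by
    rw [rdist a b (w + w), ldist a w w, ldist b w w]
  have E3 : (a * w + b * w) + (a * w + b * w) = (a * w + a * w) + (b * w + b * w) :=
    E1.symm.trans E2
  rw [add_assoc, add_assoc] at E3
  have E4 : b * w + (a * w + b * w) = a * w + (b * w + b * w) := add_left_cancel E3
  rw [← add_assoc, ← add_assoc] at E4
  have E5 : b * w + a * w = a * w + b * w := add_right_cancel E4
  have E6 : w * (b + a) = w * (a + b) := by
    rw [ldist, ldist, mulcomm w b, mulcomm w a, E5]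
  have E7 : w * ((a + b) + -(b + a)) = 0 := by
    rw [ldist, mneg, ← E6, add_neg_cancel]
  have E8 := lemA _ E7
  have : (a + b) - (b + a) = 0 := by rwa [sub_eq_add_neg]
  exact sub_eq_zero.mp this
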